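/- arXiv:1206.1208 — 3 statements merged into one kernel-verified Lean document; each statement's English description precedes it below -/
import Mathlib

section
/- For all λ ≥ 2, E[N_{1:λ+1}²] > E[N_{1:λ}²], where N_{1:λ} is the minimum of λ i.i.d. standard normal random variables. In particular, E[N_{1:λ}²] > 1 for all λ ≥ 3. -/
open MeasureTheory ProbabilityTheory Filter
open Set Topology
open scoped Real ENNReal NNReal

noncomputable def stdPi (n : ℕ) : Measure (Fin n → ℝ) :=
  Measure.pi fun _ => gaussianReal 0 1

/-- The `i`-th order statistic (0-indexed): the `i`-th smallest coordinate. -/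
noncomputable def orderStat (n i : ℕ) (ω : Fin n → ℝ) : ℝ :=
  ((List.ofFn ω).insertionSort (· ≤ ·)).getD i 0

-- characterization of the min
lemma orderStat_mem_and_le {n : ℕ} (hn : n ≠ 0) (ω : Fin n → ℝ) :
    (∃ i, ω i = orderStat n 0 ω) ∧ ∀ i, orderStat n 0 ω ≤ ω i := by
  have hperm : (List.ofFn ω).insertionSort (· ≤ ·) |>.Perm (List.ofFn ω) :=
    List.perm_insertionSort _ _
  have hsorted : ((List.ofFn ω).insertionSort (· ≤ ·)).Pairwise (· ≤ ·) :=
    List.pairwise_insertionSort _ _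
  have hlen : ((List.ofFn ω).insertionSort (· ≤ ·)).length = n := by
    rw [hperm.length_eq, List.length_ofFn]
  rcases h : (List.ofFn ω).insertionSort (· ≤ ·) with _ | ⟨a, t⟩
  · rw [h] at hlen; simp at hlen; exact absurd hlen.symm hn
  · rw [h] at hperm hsorted
    have ha : orderStat n 0 ω = a := by simp [orderStat, h]
    constructor
    · obtain ⟨i, hi⟩ := List.mem_ofFn.mp (hperm.mem_iff.mp (List.mem_cons_self))
      exact ⟨i, by rw [ha, hi]⟩
    · intro i
      have : ω i ∈ a :: t := hperm.mem_iff.mpr (by simp [List.mem_ofFn])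
      rw [ha]
      rcases List.mem_cons.mp this with h' | h'
      · exact h'.symm.le
      · exact (List.pairwise_cons.mp hsorted).1 _ h'

lemma lt_orderStat_iff {n : ℕ} (hn : n ≠ 0) (ω : Fin n → ℝ) (s : ℝ) :
    s < orderStat n 0 ω ↔ ∀ i, s < ω i := by
  obtain ⟨⟨i₀, hi₀⟩, hle⟩ := orderStat_mem_and_le hn ω
  exact ⟨fun h i => h.trans_le (hle i), fun h => hi₀ ▸ h i₀⟩

lemma le_orderStat_iff {n : ℕ} (hn : n ≠ 0) (ω : Fin n → ℝ) (s : ℝ) :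
    s ≤ orderStat n 0 ω ↔ ∀ i, s ≤ ω i := by
  obtain ⟨⟨i₀, hi₀⟩, hle⟩ := orderStat_mem_and_le hn ω
  exact ⟨fun h i => h.trans (hle i), fun h => hi₀ ▸ h i₀⟩

lemma measurable_orderStat {n : ℕ} (hn : n ≠ 0) : Measurable (orderStat n 0) := by
  apply measurable_of_Ioi
  intro s
  have : orderStat n 0 ⁻¹' (Ioi s) = Set.pi univ fun _ : Fin n => Ioi s := by
    ext ω
    simp [lt_orderStat_iff hn ω s, Set.mem_pi]
  rw [this]
  exact MeasurableSet.univ_pi fun _ => measurableSet_Ioi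

lemma gauss_map_neg : (gaussianReal 0 1).map (fun x => -x) = gaussianReal 0 1 := by
  have := gaussianReal_map_const_mul (μ := 0) (v := 1) (-1)
  have h1 : (fun x : ℝ => -1 * x) = fun x : ℝ => -x := by funext x; ring
  rw [h1] at this
  rw [this]
  congr 1
  · ring
  · ext; norm_num

lemma gauss_Ioo_pos {c d : ℝ} (h : c < d) : 0 < gaussianReal 0 1 (Ioo c d) := by
  rw [gaussianReal_of_var_ne_zero 0 one_ne_zero, withDensity_apply _ measurableSet_Ioo]
  rw [lintegral_pos_iff_support (measurable_gaussianPDF 0 1)]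
  have hsupp : Function.support (gaussianPDF 0 1) = univ := by
    ext x; simp [Function.mem_support, (gaussianPDF_pos 0 one_ne_zero x).ne']
  rw [Measure.restrict_apply' measurableSet_Ioo, hsupp, Set.univ_inter]
  simp [Real.volume_Ioo, h]

lemma gauss_Iio_neg (x : ℝ) : gaussianReal 0 1 (Iio (-x)) = gaussianReal 0 1 (Ioi x) := by
  conv_lhs => rw [← gauss_map_neg]
  rw [Measure.map_apply measurable_neg measurableSet_Iio]
  congr 1
  ext y
  simp [Set.mem_preimage, neg_lt_neg_iff]

lemma gauss_split (x : ℝ) :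
    gaussianReal 0 1 (Ioi x) + gaussianReal 0 1 (Ici (-x)) = 1 := by
  rw [← gauss_Iio_neg]
  have := measure_add_measure_compl (μ := gaussianReal 0 1) (measurableSet_Iio (a := -x))
  rwa [compl_Iio, measure_univ] at this

lemma gauss_Ioi_lt_Ici {x : ℝ} (hx : 0 < x) :
    gaussianReal 0 1 (Ioi x) < gaussianReal 0 1 (Ici (-x)) := by
  have hsub : Ioo (-x) x ∪ Ioi x ⊆ Ici (-x) := by
    intro y hy
    rcases hy with hy | hy
    · exact hy.1.le
    · exact le_of_lt (lt_trans (by linarith : -x < x) hy)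
  have hdisj : Disjoint (Ioo (-x) x) (Ioi x) := by
    apply Set.disjoint_left.mpr
    intro y hy hy'
    exact absurd hy.2 (not_lt.mpr hy'.le)
  have hm : gaussianReal 0 1 (Ioo (-x) x) + gaussianReal 0 1 (Ioi x)
      ≤ gaussianReal 0 1 (Ici (-x)) := by
    rw [← measure_union hdisj measurableSet_Ioi]
    exact measure_mono hsub
  calc gaussianReal 0 1 (Ioi x)
      < gaussianReal 0 1 (Ioi x) + gaussianReal 0 1 (Ioo (-x) x) :=
        ENNReal.lt_add_right (measure_ne_top _ _) (gauss_Ioo_pos (by linarith)).ne'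
    _ ≤ gaussianReal 0 1 (Ici (-x)) := by rwa [add_comm] at hm

instance (n : ℕ) : IsProbabilityMeasure (stdPi n) := by
  unfold stdPi; infer_instance

lemma stdPi_min_gt {n : ℕ} (hn : n ≠ 0) (s : ℝ) :
    stdPi n {ω | s < orderStat n 0 ω} = gaussianReal 0 1 (Ioi s) ^ n := by
  have hset : {ω : Fin n → ℝ | s < orderStat n 0 ω} = Set.pi univ fun _ => Ioi s := by
    ext ω; simp [lt_orderStat_iff hn ω s, Set.mem_pi]
  rw [hset, stdPi, Measure.pi_pi]
  simp

lemma stdPi_min_ge {n : ℕ} (hn : n ≠ 0) (s : ℝ) :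
    stdPi n {ω | s ≤ orderStat n 0 ω} = gaussianReal 0 1 (Ici s) ^ n := by
  have hset : {ω : Fin n → ℝ | s ≤ orderStat n 0 ω} = Set.pi univ fun _ => Ici s := by
    ext ω; simp [le_orderStat_iff hn ω s, Set.mem_pi, Pi.le_def]
  rw [hset, stdPi, Measure.pi_pi]
  simp

lemma stdPi_sq_gt {n : ℕ} (hn : n ≠ 0) {t : ℝ} (ht : 0 < t) :
    stdPi n {ω | t < (orderStat n 0 ω) ^ 2}
      = gaussianReal 0 1 (Ioi (Real.sqrt t)) ^ n
        + (1 - gaussianReal 0 1 (Ici (-Real.sqrt t)) ^ n) := by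
  have hiff : ∀ y : ℝ, t < y ^ 2 ↔ (Real.sqrt t < y ∨ ¬(-Real.sqrt t ≤ y)) := by
    intro y
    rw [not_le]
    constructor
    · intro h
      have habs : Real.sqrt t < |y| := by
        rw [← Real.sqrt_sq_eq_abs]
        exact (Real.sqrt_lt_sqrt_iff ht.le).mpr h
      rcases lt_abs.mp habs with h' | h'
      · exact Or.inl h'
      · exact Or.inr (by linarith)
    · intro h
      have habs : Real.sqrt t < |y| := by
        rcases h with h' | h'
        · exact lt_of_lt_of_le h' (le_abs_self y)
        · exact lt_of_lt_of_le (by linarith : Real.sqrt t < -y) (neg_le_abs y)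
      have h2 : Real.sqrt t ^ 2 < |y| ^ 2 :=
        pow_lt_pow_left₀ habs (Real.sqrt_nonneg t) two_ne_zero
      rwa [Real.sq_sqrt ht.le, sq_abs] at h2
  have hmB : MeasurableSet {ω : Fin n → ℝ | -Real.sqrt t ≤ orderStat n 0 ω} :=
    measurableSet_le measurable_const (measurable_orderStat hn)
  have hset : {ω : Fin n → ℝ | t < (orderStat n 0 ω) ^ 2}
      = {ω | Real.sqrt t < orderStat n 0 ω}
        ∪ {ω | -Real.sqrt t ≤ orderStat n 0 ω}ᶜ := by
    ext ω
    simp only [Set.mem_setOf_eq, Set.mem_union, Set.mem_compl_iff]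
    exact hiff _
  have hdisj : Disjoint {ω : Fin n → ℝ | Real.sqrt t < orderStat n 0 ω}
      {ω : Fin n → ℝ | -Real.sqrt t ≤ orderStat n 0 ω}ᶜ := by
    apply Set.disjoint_left.mpr
    intro ω h1 h2
    simp only [Set.mem_setOf_eq, Set.mem_compl_iff, not_le] at h1 h2
    have := Real.sqrt_nonneg t
    linarith
  rw [hset, measure_union hdisj hmB.compl, stdPi_min_gt hn,
    measure_compl hmB (measure_ne_top _ _), measure_univ, stdPi_min_ge hn]

lemma integrable_sq_exp_aux :
    Integrable (fun x : ℝ => x ^ 2 * Real.exp (-(1/2 : ℝ) * x ^ 2)) := by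
  have h := integrable_rpow_mul_exp_neg_mul_sq (b := (1/2 : ℝ)) (by norm_num) (s := 2)
    (by norm_num)
  have h2 : ∀ x : ℝ, x ^ (2 : ℝ) = x ^ (2 : ℕ) := fun x => by
    rw [show (2:ℝ) = ((2:ℕ):ℝ) by norm_num, Real.rpow_natCast]
  convert h using 2 with x
  rw [h2]

lemma tendsto_aux : Tendsto (fun x : ℝ => x * Real.exp (-(1/2 : ℝ) * x ^ 2))
    atTop (𝓝 0) := by
  have h := rpow_mul_exp_neg_mul_sq_isLittleO_exp_neg (b := (1/2:ℝ)) (by norm_num) 1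
  have h2 : (fun x : ℝ => x ^ (1:ℝ) * Real.exp (-(1/2:ℝ) * x ^ 2))
      = fun x : ℝ => x * Real.exp (-(1/2:ℝ) * x ^ 2) := by
    funext x; rw [Real.rpow_one]
  rw [h2] at h
  apply h.isBigO.trans_tendsto
  have : Tendsto (fun x : ℝ => -(1/2:ℝ) * x) atTop atBot :=
    Tendsto.const_mul_atTop_of_neg (by norm_num) tendsto_id
  exact Real.tendsto_exp_atBot.comp this

lemma integral_sq_exp :
    ∫ x : ℝ, x ^ 2 * Real.exp (-(1/2:ℝ) * x ^ 2) = Real.sqrt (2 * π) := by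
  have I1 : Integrable (fun x : ℝ => Real.exp (-(1/2:ℝ) * x ^ 2)) :=
    integrable_exp_neg_mul_sq (by norm_num)
  have I2 := integrable_sq_exp_aux
  have hF : ∀ x : ℝ, HasDerivAt (fun y : ℝ => -y * Real.exp (-(1/2:ℝ) * y ^ 2))
      (x ^ 2 * Real.exp (-(1/2:ℝ) * x ^ 2) - Real.exp (-(1/2:ℝ) * x ^ 2)) x := by
    intro x
    have h1 : HasDerivAt (fun y : ℝ => -y) (-1) x := (hasDerivAt_id x).neg
    have hinner : HasDerivAt (fun y : ℝ => -(1/2:ℝ) * y ^ 2) (-(1/2:ℝ) * (2 * x)) x := by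
      have := (hasDerivAt_pow 2 x).const_mul (-(1/2:ℝ))
      simpa using this
    have h2 : HasDerivAt (fun y : ℝ => Real.exp (-(1/2:ℝ) * y ^ 2))
        (Real.exp (-(1/2:ℝ) * x ^ 2) * (-(1/2:ℝ) * (2 * x))) x := hinner.exp
    have := h1.mul h2
    convert this using 1 <;> (try rfl)
    ring
  have hf' : Integrable (fun x : ℝ =>
      x ^ 2 * Real.exp (-(1/2:ℝ) * x ^ 2) - Real.exp (-(1/2:ℝ) * x ^ 2)) := I2.sub I1
  have htop : Tendsto (fun x : ℝ => -x * Real.exp (-(1/2:ℝ) * x ^ 2)) atTop (𝓝 0) := by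
    have := tendsto_aux.neg
    simp only [neg_zero] at this
    convert this using 1
    funext x; ring
  have hbot : Tendsto (fun x : ℝ => -x * Real.exp (-(1/2:ℝ) * x ^ 2)) atBot (𝓝 0) := by
    have hcomp := tendsto_aux.comp tendsto_neg_atBot_atTop
    have heq : ((fun x : ℝ => x * Real.exp (-(1/2:ℝ) * x ^ 2)) ∘ (fun x : ℝ => -x))
        = fun x : ℝ => -x * Real.exp (-(1/2:ℝ) * x ^ 2) := by
      funext x; simp only [Function.comp]; ring_nf
    rwa [heq] at hcomp
  have key : ∫ x : ℝ, (x ^ 2 * Real.exp (-(1/2:ℝ) * x ^ 2) - Real.exp (-(1/2:ℝ) * x ^ 2))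
      = 0 - 0 := integral_of_hasDerivAt_of_tendsto hF hf' hbot htop
  rw [integral_sub I2 I1, sub_zero, sub_eq_zero] at key
  rw [key, integral_gaussian, show π / (1/2:ℝ) = 2 * π by ring]

lemma gaussianPDF_toReal (x : ℝ) :
    ((gaussianPDF 0 1 x).toReal) = (Real.sqrt (2*π))⁻¹ * Real.exp (-(1/2:ℝ) * x ^ 2) := by
  rw [gaussianPDF, ENNReal.toReal_ofReal (gaussianPDFReal_nonneg _ _ _), gaussianPDFReal]
  have h1 : -(x - 0) ^ 2 / (2 * ((1:ℝ≥0):ℝ)) = -(1/2:ℝ) * x ^ 2 := by push_cast; ring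
  have h2 : 2 * π * ((1:ℝ≥0):ℝ) = 2 * π := by push_cast; ring
  rw [h1, h2]

lemma integrable_sq_gauss : Integrable (fun x : ℝ => x ^ 2) (gaussianReal 0 1) := by
  rw [gaussianReal_of_var_ne_zero 0 one_ne_zero,
    integrable_withDensity_iff (measurable_gaussianPDF 0 1)
      (ae_of_all _ fun x => ENNReal.ofReal_lt_top)]
  have heq : (fun x : ℝ => x ^ 2 * (gaussianPDF 0 1 x).toReal)
      = fun x : ℝ => (Real.sqrt (2*π))⁻¹ * (x ^ 2 * Real.exp (-(1/2:ℝ) * x ^ 2)) := by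
    funext x; rw [gaussianPDF_toReal]; ring
  rw [heq]
  exact integrable_sq_exp_aux.const_mul _

lemma integral_sq_gauss : ∫ x : ℝ, x ^ 2 ∂(gaussianReal 0 1) = 1 := by
  rw [gaussianReal_of_var_ne_zero 0 one_ne_zero]
  have hd : (gaussianPDF 0 1) = fun x => ((gaussianPDFReal 0 1 x).toNNReal : ℝ≥0∞) := by
    funext x; rw [gaussianPDF]; rfl
  rw [hd, integral_withDensity_eq_integral_smul
    ((measurable_gaussianPDFReal 0 1).real_toNNReal) (fun x : ℝ => x ^ 2)]
  have heq : (fun x : ℝ => (gaussianPDFReal 0 1 x).toNNReal • x ^ 2)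
      = fun x : ℝ => (Real.sqrt (2*π))⁻¹ * (x ^ 2 * Real.exp (-(1/2:ℝ) * x ^ 2)) := by
    funext x
    rw [NNReal.smul_def, smul_eq_mul, Real.coe_toNNReal _ (gaussianPDFReal_nonneg 0 1 x)]
    have : gaussianPDFReal 0 1 x = (gaussianPDF 0 1 x).toReal := by
      rw [gaussianPDF, ENNReal.toReal_ofReal (gaussianPDFReal_nonneg _ _ _)]
    rw [this, gaussianPDF_toReal]; ring
  rw [heq, integral_const_mul, integral_sq_exp]
  rw [inv_mul_cancel₀]
  positivity

lemma map_eval_stdPi {n : ℕ} (i : Fin n) :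
    (stdPi n).map (Function.eval i) = gaussianReal 0 1 := by
  ext s hs
  rw [Measure.map_apply (measurable_pi_apply i) hs, stdPi]
  have : Function.eval i ⁻¹' s = Set.pi univ (Function.update (fun _ : Fin n => (univ : Set ℝ)) i s) := by
    rw [Set.eval_preimage]
  rw [this, Measure.pi_pi, Finset.prod_eq_single i
    (fun j _ hj => by rw [Function.update_of_ne hj]; simp)
    (fun h => absurd (Finset.mem_univ i) h)]
  simp

lemma integrable_coord_sq {n : ℕ} (i : Fin n) :
    Integrable (fun ω : Fin n → ℝ => (ω i) ^ 2) (stdPi n) := by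
  have h := integrable_sq_gauss
  rw [← map_eval_stdPi i] at h
  exact (integrable_map_measure ((measurable_id.pow_const 2).aestronglyMeasurable)
    (measurable_pi_apply i).aemeasurable).mp h

lemma integrable_orderStat_sq {n : ℕ} (hn : n ≠ 0) :
    Integrable (fun ω : Fin n → ℝ => (orderStat n 0 ω) ^ 2) (stdPi n) := by
  have hsum : Integrable (fun ω : Fin n → ℝ => ∑ i, (ω i) ^ 2) (stdPi n) :=
    integrable_finset_sum _ fun i _ => integrable_coord_sq i
  apply hsum.mono' (((measurable_orderStat hn).pow_const 2).aestronglyMeasurable)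
  apply ae_of_all
  intro ω
  obtain ⟨⟨i₀, hi₀⟩, _⟩ := orderStat_mem_and_le hn ω
  rw [Real.norm_eq_abs, abs_of_nonneg (sq_nonneg _), ← hi₀]
  exact Finset.single_le_sum (fun j _ => sq_nonneg (ω j)) (Finset.mem_univ i₀)

lemma moment_eq {n : ℕ} (hn : n ≠ 0) :
    (∫ ω, (orderStat n 0 ω) ^ 2 ∂stdPi n)
      = (∫⁻ t in Ioi (0:ℝ), stdPi n {ω | t < (orderStat n 0 ω) ^ 2}).toReal
    ∧ (∫⁻ t in Ioi (0:ℝ), stdPi n {ω | t < (orderStat n 0 ω) ^ 2}) ≠ ⊤ := by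
  have hint := integrable_orderStat_sq hn
  have hnn : 0 ≤ᵐ[stdPi n] fun ω => (orderStat n 0 ω) ^ 2 :=
    ae_of_all _ fun ω => sq_nonneg _
  have hkey := lintegral_eq_lintegral_meas_lt (stdPi n) hnn hint.aemeasurable
  refine ⟨?_, ?_⟩
  · rw [integral_eq_lintegral_of_nonneg_ae hnn hint.aestronglyMeasurable, hkey]
  · rw [← hkey]; exact hint.lintegral_lt_top.ne

lemma abc_facts {t : ℝ} (ht : 0 < t) :
    0 < (gaussianReal 0 1 (Ioi (Real.sqrt t))).toReal
    ∧ (gaussianReal 0 1 (Ioi (Real.sqrt t))).toReal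
        + (gaussianReal 0 1 (Ici (-Real.sqrt t))).toReal = 1
    ∧ (gaussianReal 0 1 (Ioi (Real.sqrt t))).toReal
        < (gaussianReal 0 1 (Ici (-Real.sqrt t))).toReal := by
  have hx : 0 < Real.sqrt t := Real.sqrt_pos.mpr ht
  refine ⟨?_, ?_, ?_⟩
  · apply ENNReal.toReal_pos _ (measure_ne_top _ _)
    have := (gauss_Ioo_pos (lt_add_one (Real.sqrt t))).trans_le
      (measure_mono Set.Ioo_subset_Ioi_self)
    exact this.ne'
  · rw [← ENNReal.toReal_add (measure_ne_top _ _) (measure_ne_top _ _),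
      gauss_split (Real.sqrt t), ENNReal.toReal_one]
  · exact ENNReal.toReal_lt_toReal (measure_ne_top _ _) (measure_ne_top _ _)
      |>.mpr (gauss_Ioi_lt_Ici hx)

lemma key_formula {n : ℕ} (hn : n ≠ 0) {t : ℝ} (ht : 0 < t) :
    stdPi n {ω | t < (orderStat n 0 ω) ^ 2}
      = ENNReal.ofReal ((gaussianReal 0 1 (Ioi (Real.sqrt t))).toReal ^ n
          + (1 - (gaussianReal 0 1 (Ici (-Real.sqrt t))).toReal ^ n)) := by
  set A := gaussianReal 0 1 (Ioi (Real.sqrt t)) with hA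
  set B := gaussianReal 0 1 (Ici (-Real.sqrt t)) with hB
  have hb1 : B.toReal ≤ 1 := by
    rw [← ENNReal.toReal_one]
    exact ENNReal.toReal_mono ENNReal.one_ne_top prob_le_one
  have hbn : B.toReal ^ n ≤ 1 := pow_le_one₀ ENNReal.toReal_nonneg hb1
  rw [stdPi_sq_gt hn ht, ← hA, ← hB]
  rw [ENNReal.ofReal_add (pow_nonneg ENNReal.toReal_nonneg n) (by linarith)]
  congr 1
  · rw [ENNReal.ofReal_pow ENNReal.toReal_nonneg, ENNReal.ofReal_toReal (measure_ne_top _ _)]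
  · rw [ENNReal.ofReal_sub _ (pow_nonneg ENNReal.toReal_nonneg n), ENNReal.ofReal_one,
      ENNReal.ofReal_pow ENNReal.toReal_nonneg, ENNReal.ofReal_toReal (measure_ne_top _ _)]

lemma real_mono {a b : ℝ} (ha : 0 < a) (hab : a + b = 1) (hlt : a < b) (m : ℕ) :
    a ^ (m+2) + (1 - b ^ (m+2)) < a ^ (m+3) + (1 - b ^ (m+3)) := by
  have hb : 0 < b := lt_trans ha hlt
  have key0 : a ^ (m+1) < b ^ (m+1) := pow_lt_pow_left₀ hlt ha.le (Nat.succ_ne_zero m)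
  have key : a ^ (m+2) * b < b ^ (m+2) * a := by
    calc a ^ (m+2) * b = a ^ (m+1) * (a*b) := by ring
      _ < b ^ (m+1) * (a*b) := mul_lt_mul_of_pos_right key0 (mul_pos ha hb)
      _ = b ^ (m+2) * a := by ring
  have ea : a = 1 - b := by linarith
  have eb : b = 1 - a := by linarith
  have e1 : a ^ (m+3) = a ^ (m+2) - a ^ (m+2) * b := by
    calc a ^ (m+3) = a ^ (m+2) * a := by ring
      _ = a ^ (m+2) - a ^ (m+2) * b := by rw [ea]; ring
  have e2 : b ^ (m+3) = b ^ (m+2) - b ^ (m+2) * a := by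
    calc b ^ (m+3) = b ^ (m+2) * b := by ring
      _ = b ^ (m+2) - b ^ (m+2) * a := by rw [eb]; ring
  linarith

lemma lint_mono (n : ℕ) (hn : 2 ≤ n) :
    (∫⁻ t in Ioi (0:ℝ), stdPi n {ω | t < (orderStat n 0 ω) ^ 2})
      < ∫⁻ t in Ioi (0:ℝ), stdPi (n+1) {ω | t < (orderStat (n+1) 0 ω) ^ 2} := by
  have hn0 : n ≠ 0 := by omega
  have hmeas : Measurable fun t : ℝ => stdPi (n+1) {ω | t < (orderStat (n+1) 0 ω) ^ 2} := by
    apply Antitone.measurable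
    intro s t hst
    exact measure_mono fun ω hω => lt_of_le_of_lt hst hω
  apply lintegral_strict_mono ?_ hmeas.aemeasurable (moment_eq hn0).2
  · rw [ae_restrict_iff' measurableSet_Ioi]
    apply ae_of_all
    intro t ht
    obtain ⟨ha, hab, hlt⟩ := abc_facts ht
    rw [key_formula hn0 ht, key_formula (by omega : n + 1 ≠ 0) ht]
    obtain ⟨m, rfl⟩ : ∃ m, n = m + 2 := ⟨n - 2, by omega⟩
    have hmono := real_mono ha hab hlt m
    have hbb : (gaussianReal 0 1 (Ici (-Real.sqrt t))).toReal ^ (m+3) ≤ 1 :=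
      pow_le_one₀ ENNReal.toReal_nonneg (by linarith)
    apply (ENNReal.ofReal_lt_ofReal_iff
      (add_pos_of_pos_of_nonneg (pow_pos ha _) (by linarith))).mpr
    exact hmono
  · simp only [ne_eq, Measure.restrict_eq_zero]
    simp [Real.volume_Ioi]

lemma lint_eq12 :
    (∫⁻ t in Ioi (0:ℝ), stdPi 1 {ω | t < (orderStat 1 0 ω) ^ 2})
      = ∫⁻ t in Ioi (0:ℝ), stdPi 2 {ω | t < (orderStat 2 0 ω) ^ 2} := by
  apply setLIntegral_congr_fun measurableSet_Ioi
  intro t ht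
  dsimp only
  obtain ⟨ha, hab, hlt⟩ := abc_facts ht
  rw [key_formula one_ne_zero ht, key_formula (by omega : (2:ℕ) ≠ 0) ht]
  congr 1
  set a := (gaussianReal 0 1 (Ioi (Real.sqrt t))).toReal
  set b := (gaussianReal 0 1 (Ici (-Real.sqrt t))).toReal
  have : a ^ 1 + (1 - b ^ 1) = a ^ 2 + (1 - b ^ 2) := by
    have h2 : a ^ 2 - b ^ 2 = (a + b) * (a - b) := by ring
    rw [hab, one_mul] at h2
    simp only [pow_one]
    nlinarith [h2]
  rw [this]

lemma orderStat_one (ω : Fin 1 → ℝ) : orderStat 1 0 ω = ω 0 := by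
  simp [orderStat, List.ofFn_succ]

lemma base_moment : ∫ ω, (orderStat 1 0 ω) ^ 2 ∂stdPi 1 = 1 := by
  have h1 : ∫ ω, (orderStat 1 0 ω) ^ 2 ∂stdPi 1 = ∫ ω, (ω 0) ^ 2 ∂stdPi 1 := by
    simp only [orderStat_one]
  have h2 : ∫ x, x ^ 2 ∂((stdPi 1).map (Function.eval (0 : Fin 1)))
      = ∫ ω, (ω 0) ^ 2 ∂stdPi 1 :=
    integral_map (measurable_pi_apply (0 : Fin 1)).aemeasurable
      ((measurable_id.pow_const 2).aestronglyMeasurable)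
  rw [h1, ← h2, map_eval_stdPi, integral_sq_gauss]

theorem stmt_2 :
    (∀ lam : ℕ, 2 ≤ lam →
      (∫ ω, (orderStat lam 0 ω) ^ 2 ∂(stdPi lam))
        < ∫ ω, (orderStat (lam + 1) 0 ω) ^ 2 ∂(stdPi (lam + 1))) ∧
    (∀ lam : ℕ, 3 ≤ lam → 1 < ∫ ω, (orderStat lam 0 ω) ^ 2 ∂(stdPi lam)) := by
  have hmono : ∀ lam : ℕ, 2 ≤ lam →
      (∫ ω, (orderStat lam 0 ω) ^ 2 ∂(stdPi lam))
        < ∫ ω, (orderStat (lam + 1) 0 ω) ^ 2 ∂(stdPi (lam + 1)) := by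
    intro lam hlam
    have h0 : lam ≠ 0 := by omega
    have h1 : lam + 1 ≠ 0 := by omega
    rw [(moment_eq h0).1, (moment_eq h1).1]
    exact (ENNReal.toReal_lt_toReal (moment_eq h0).2 (moment_eq h1).2).mpr
      (lint_mono lam hlam)
  refine ⟨hmono, ?_⟩
  intro lam hlam
  induction lam, hlam using Nat.le_induction with
  | base =>
    have e12 : ∫ ω, (orderStat 1 0 ω) ^ 2 ∂stdPi 1
        = ∫ ω, (orderStat 2 0 ω) ^ 2 ∂stdPi 2 := by
      rw [(moment_eq one_ne_zero).1, (moment_eq (by omega : (2:ℕ) ≠ 0)).1, lint_eq12]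
    have h23 := hmono 2 le_rfl
    have hb := base_moment
    norm_num at h23 e12 ⊢
    linarith
  | succ n hn ih =>
    exact lt_trans ih (hmono n (by omega))
end

section
/- Define the Markov chain Z_{t+1} = Z_t/η*_t + ξ*_{t+1,1}, where (η*_t, ξ*_{t+1,1}) are i.i.d. pairs with ξ*_1 the first coordinate of the selected step (distributed as N_{1:λ}) and η*_t = exp((1/(2d_σ))(‖ξ*_t‖²/n − 1)). If there exists α > 0 with E[(η*)^{-α}] < 1, then the drift function V(x) = 1 + |x|^α satisfies: there exist ε > 0, M > 0 and b < ∞ such that ΔV(x) := E[V(Z_{t+1}) | Z_t = x] − V(x) ≤ −εV(x) + b·1_{[−M,M]}(x) for all x ∈ ℝ. -/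
open MeasureTheory ProbabilityTheory Filter

/-- Law of the selected step on a linear function: first coordinate distributed as
the minimum of `lam` i.i.d. standard normals, the other coordinates standard normal,
all independent. -/
noncomputable def selLaw (n lam : ℕ) : Measure (Fin n → ℝ) :=
  Measure.pi fun i =>
    if (i : ℕ) = 0 then Measure.map (orderStat lam 0) (stdPi lam)
    else gaussianReal 0 1


open Real

lemma rpow_add_le' {α δ a b : ℝ} (hα : 0 < α) (hδ : 0 < δ) (ha : 0 ≤ a) (hb : 0 ≤ b) :
    (a + b) ^ α ≤ (1 + δ) ^ α * a ^ α + (1 + δ⁻¹) ^ α * b ^ α := by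
  rcases le_or_gt b (δ * a) with h | h
  · have h1 : a + b ≤ (1 + δ) * a := by nlinarith
    calc (a + b) ^ α ≤ ((1 + δ) * a) ^ α :=
          Real.rpow_le_rpow (by positivity) h1 hα.le
      _ = (1 + δ) ^ α * a ^ α := Real.mul_rpow (by positivity) ha
      _ ≤ _ := le_add_of_nonneg_right (by positivity)
  · have h2 : a ≤ δ⁻¹ * b := by
      have := mul_le_mul_of_nonneg_left h.le (inv_pos.mpr hδ).le
      rwa [← mul_assoc, inv_mul_cancel₀ hδ.ne', one_mul] at this
    have h1 : a + b ≤ (1 + δ⁻¹) * b := by nlinarith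
    calc (a + b) ^ α ≤ ((1 + δ⁻¹) * b) ^ α :=
          Real.rpow_le_rpow (by positivity) h1 hα.le
      _ = (1 + δ⁻¹) ^ α * b ^ α := Real.mul_rpow (by positivity) hb
      _ ≤ _ := le_add_of_nonneg_left (by positivity)

lemma map_eval_pi' {ι : Type*} [Fintype ι] [DecidableEq ι] {X : ι → Type*} [∀ i, MeasurableSpace (X i)]
    (μ : ∀ i, Measure (X i)) [∀ i, IsProbabilityMeasure (μ i)] (i : ι) :
    Measure.map (Function.eval i) (Measure.pi μ) = μ i := by
  ext s hs
  rw [Measure.map_apply (measurable_pi_apply i) hs, ← Set.univ_pi_update_univ, Measure.pi_pi]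
  rw [Finset.prod_eq_single i (fun j _ hj => by rw [Function.update_of_ne hj]; exact measure_univ)
      (fun h => absurd (Finset.mem_univ i) h)]
  rw [Function.update_self]

lemma integrable_comp_eval' {ι : Type*} [Fintype ι] [DecidableEq ι] {X : ι → Type*} [∀ i, MeasurableSpace (X i)]
    (μ : ∀ i, Measure (X i)) [∀ i, IsProbabilityMeasure (μ i)] (i : ι) {F : X i → ℝ}
    (hF : Measurable F) (h : Integrable F (μ i)) :
    Integrable (fun ω => F (ω i)) (Measure.pi μ) := by
  have hmap := map_eval_pi' μ i
  exact (integrable_map_measure hF.aestronglyMeasurable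
    (measurable_pi_apply i).aemeasurable).mp (by rwa [hmap])

lemma measurable_finset_inf' {ι : Type*} [Fintype ι] {s : Finset ι} (hs : s.Nonempty) :
    Measurable fun ω : ι → ℝ => s.inf' hs ω := by
  induction hs using Finset.Nonempty.cons_induction with
  | singleton a => exact measurable_pi_apply a
  | cons a t hat ht ih =>
      simp only [Finset.inf'_cons ht]
      exact (measurable_pi_apply a).inf ih

lemma orderStat_zero_eq {lam : ℕ} (hlam : 1 ≤ lam) (ω : Fin lam → ℝ) :
    orderStat lam 0 ω = Finset.univ.inf' ⟨⟨0, hlam⟩, Finset.mem_univ _⟩ ω := by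
  have hl : ∃ l, l = (List.ofFn ω).insertionSort (· ≤ ·) := ⟨_, rfl⟩
  obtain ⟨l, hl⟩ := hl
  have hperm : List.Perm l (List.ofFn ω) := hl ▸ List.perm_insertionSort _ _
  have hsorted : l.Pairwise (· ≤ ·) := hl ▸ List.pairwise_insertionSort _ _
  have hne : l ≠ [] := by
    intro h
    have := hperm.length_eq
    simp [h, List.length_ofFn] at this
    omega
  obtain ⟨a, t, rfl⟩ := List.exists_cons_of_ne_nil hne
  have hmem : a ∈ List.ofFn ω := hperm.mem_iff.mp (List.mem_cons_self (a := a) (l := t))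
  obtain ⟨i, hi⟩ := Set.mem_range.mp ((List.mem_ofFn' _ _).mp hmem)
  have hle : ∀ j : Fin lam, a ≤ ω j := by
    intro j
    have hj : ω j ∈ a :: t := hperm.mem_iff.mpr (by rw [List.mem_ofFn]; exact ⟨j, rfl⟩)
    rcases List.mem_cons.mp hj with h | h
    · exact h.ge
    · exact (List.pairwise_cons.mp hsorted).1 _ h
  have : orderStat lam 0 ω = a := by unfold orderStat; rw [← hl]; rfl
  rw [this]
  apply le_antisymm
  · exact Finset.le_inf' _ _ fun j _ => hle j
  · exact hi ▸ Finset.inf'_le _ (Finset.mem_univ i)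

lemma abs_rpow_le_exp (α t : ℝ) (hα : 0 < α) : |t| ^ α ≤ rexp (α ^ 2) * rexp (t ^ 2 / 4) := by
  have h1 : |t| ≤ rexp |t| := by linarith [Real.add_one_le_exp |t|]
  have h2 : |t| ^ α ≤ rexp |t| ^ α := Real.rpow_le_rpow (abs_nonneg t) h1 hα.le
  have h3 : rexp |t| ^ α = rexp (|t| * α) := by
    rw [← Real.exp_mul]
  have h4 : |t| * α ≤ α ^ 2 + t ^ 2 / 4 := by
    nlinarith [sq_nonneg (α - |t| / 2), sq_abs t, abs_nonneg t]
  calc |t| ^ α ≤ rexp (|t| * α) := h3 ▸ h2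
    _ ≤ rexp (α ^ 2 + t ^ 2 / 4) := Real.exp_le_exp.mpr h4
    _ = rexp (α ^ 2) * rexp (t ^ 2 / 4) := Real.exp_add _ _

lemma integrable_abs_rpow_gaussianReal {α : ℝ} (hα : 0 < α) :
    Integrable (fun t => |t| ^ α) (gaussianReal 0 1) := by
  rw [gaussianReal_of_var_ne_zero _ one_ne_zero,
    integrable_withDensity_iff_integrable_smul' (measurable_gaussianPDF 0 1)
      (Eventually.of_forall fun x => ENNReal.ofReal_lt_top)]
  have hmeas : Measurable fun t : ℝ => gaussianPDFReal 0 1 t * |t| ^ α :=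
    (measurable_gaussianPDFReal 0 1).mul
      ((Real.continuous_rpow_const hα.le).measurable.comp measurable_abs)
  have hint : Integrable (fun t : ℝ => (√(2 * π))⁻¹ * rexp (α ^ 2) * rexp (-(4⁻¹ : ℝ) * t ^ 2)) :=
    (integrable_exp_neg_mul_sq (by norm_num : (0:ℝ) < 4⁻¹)).const_mul _
  refine hint.mono' ?_ (Eventually.of_forall fun t => ?_)
  · refine AEStronglyMeasurable.congr (hmeas.aestronglyMeasurable) ?_
    refine Eventually.of_forall fun t => ?_
    simp [gaussianPDF, smul_eq_mul, ENNReal.toReal_ofReal (gaussianPDFReal_nonneg 0 1 t)]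
  · have hpdf : gaussianPDFReal 0 1 t = (√(2 * π))⁻¹ * rexp (-(t ^ 2) / 2) := by
      simp [gaussianPDFReal]
    have h0 : (0:ℝ) ≤ gaussianPDFReal 0 1 t * |t| ^ α :=
      mul_nonneg (gaussianPDFReal_nonneg 0 1 t) (Real.rpow_nonneg (abs_nonneg t) α)
    have hb := abs_rpow_le_exp α t hα
    rw [Real.norm_eq_abs]
    calc |(gaussianPDF 0 1 t).toReal • |t| ^ α|
        = gaussianPDFReal 0 1 t * |t| ^ α := by
          simp [gaussianPDF, smul_eq_mul, ENNReal.toReal_ofReal (gaussianPDFReal_nonneg 0 1 t),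
            abs_of_nonneg h0]
      _ ≤ (√(2 * π))⁻¹ * rexp (-(t ^ 2) / 2) * (rexp (α ^ 2) * rexp (t ^ 2 / 4)) := by
          rw [hpdf]
          exact mul_le_mul_of_nonneg_left hb (by positivity)
      _ = (√(2 * π))⁻¹ * rexp (α ^ 2) * rexp (-(4⁻¹ : ℝ) * t ^ 2) := by
          simp only [mul_assoc, ← Real.exp_add]
          congr 1
          ring

lemma drift_main {n : ℕ} (μ : Measure (Fin n → ℝ)) [IsProbabilityMeasure μ]
    (g : (Fin n → ℝ) → ℝ) (hgpos : ∀ ξ, 0 < g ξ) (hgm : Measurable g) (i0 : Fin n)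
    {α : ℝ} (hα : 0 < α)
    (hint1 : Integrable (fun ξ => g ξ ^ (-α)) μ)
    (hρ : (∫ ξ, g ξ ^ (-α) ∂μ) < 1)
    (hint2 : Integrable (fun ξ => |ξ i0| ^ α) μ)
    (V : ℝ → ℝ) (hV : ∀ x, V x = 1 + |x| ^ α) :
    ∃ ε > (0 : ℝ), ∃ M > (0 : ℝ), ∃ b : ℝ,
      ∀ x : ℝ,
        (∫ ξ, V (x / g ξ + ξ i0) ∂μ) - V x
          ≤ -ε * V x + Set.indicator (Set.Icc (-M) M) (fun _ => b) x := by
  set ρ := ∫ ξ, g ξ ^ (-α) ∂μ with hρdef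
  have hρ0 : 0 < ρ := by
    rw [hρdef, MeasureTheory.integral_pos_iff_support_of_nonneg
      (fun ξ => (Real.rpow_pos_of_pos (hgpos ξ) (-α)).le) hint1]
    have : (Function.support fun ξ => g ξ ^ (-α)) = Set.univ := by
      ext ξ; simp [Function.mem_support, (Real.rpow_pos_of_pos (hgpos ξ) (-α)).ne']
    rw [this]
    simp
  set ρ' : ℝ := (1 + ρ) / 2 with hρ'def
  have hρ'1 : ρ' < 1 := by rw [hρ'def]; linarith
  have hρρ' : 1 < ρ' / ρ := by
    rw [lt_div_iff₀ hρ0, hρ'def]; linarith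
  set δ : ℝ := (ρ' / ρ) ^ (α⁻¹) - 1 with hδdef
  have hδ0 : 0 < δ := by
    rw [hδdef, sub_pos]
    exact Real.one_lt_rpow_iff_of_pos (by positivity) |>.mpr (Or.inl ⟨hρρ', by positivity⟩)
  have hA : (1 + δ) ^ α = ρ' / ρ := by
    rw [hδdef, add_sub_cancel, ← Real.rpow_mul (by positivity), inv_mul_cancel₀ hα.ne',
      Real.rpow_one]
  have hAρ : (1 + δ) ^ α * ρ = ρ' := by
    rw [hA]; field_simp
  set B : ℝ := (1 + δ⁻¹) ^ α with hBdef
  have hB0 : 0 ≤ B := Real.rpow_nonneg (by positivity) _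
  set C : ℝ := ∫ ξ, |ξ i0| ^ α ∂μ with hCdef
  have hC0 : 0 ≤ C :=
    MeasureTheory.integral_nonneg fun ξ => Real.rpow_nonneg (abs_nonneg _) _
  set D : ℝ := B * C with hDdef
  have hD0 : 0 ≤ D := mul_nonneg hB0 hC0
  set ε : ℝ := (1 - ρ') / 2 with hεdef
  have hε0 : 0 < ε := by rw [hεdef]; linarith
  set M : ℝ := max 1 (((D + ε) / ε) ^ (α⁻¹)) with hMdef
  have hM0 : 0 < M := lt_of_lt_of_le one_pos (le_max_left _ _)
  refine ⟨ε, hε0, M, hM0, D + ε, fun x => ?_⟩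
  -- pointwise bound
  have hptw : ∀ ξ : Fin n → ℝ, V (x / g ξ + ξ i0)
      ≤ 1 + (1 + δ) ^ α * |x| ^ α * g ξ ^ (-α) + B * |ξ i0| ^ α := by
    intro ξ
    rw [hV]
    have h1 : |x / g ξ + ξ i0| ≤ |x| / g ξ + |ξ i0| := by
      calc |x / g ξ + ξ i0| ≤ |x / g ξ| + |ξ i0| := abs_add_le _ _
        _ = |x| / g ξ + |ξ i0| := by rw [abs_div, abs_of_pos (hgpos ξ)]
    have h2 : |x / g ξ + ξ i0| ^ α ≤ (|x| / g ξ + |ξ i0|) ^ α :=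
      Real.rpow_le_rpow (abs_nonneg _) h1 hα.le
    have h3 := rpow_add_le' hα hδ0 (div_nonneg (abs_nonneg x) (hgpos ξ).le) (abs_nonneg (ξ i0))
    have h4 : (|x| / g ξ) ^ α = |x| ^ α * g ξ ^ (-α) := by
      rw [Real.div_rpow (abs_nonneg x) (hgpos ξ).le, Real.rpow_neg (hgpos ξ).le, div_eq_mul_inv]
    have := h2.trans h3
    rw [h4] at this
    calc 1 + |x / g ξ + ξ i0| ^ α
        ≤ 1 + ((1 + δ) ^ α * (|x| ^ α * g ξ ^ (-α)) + B * |ξ i0| ^ α) := by linarith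
      _ = 1 + (1 + δ) ^ α * |x| ^ α * g ξ ^ (-α) + B * |ξ i0| ^ α := by ring
  -- integral bound
  have hdom : Integrable (fun ξ => 1 + (1 + δ) ^ α * |x| ^ α * g ξ ^ (-α) + B * |ξ i0| ^ α) μ :=
    ((integrable_const 1).add (hint1.const_mul _)).add (hint2.const_mul _)
  have hVnn : ∀ᵐ ξ ∂μ, 0 ≤ V (x / g ξ + ξ i0) :=
    Eventually.of_forall fun ξ => by
      rw [hV]; positivity
  have hkey : (∫ ξ, V (x / g ξ + ξ i0) ∂μ) ≤ 1 + ρ' * |x| ^ α + D := by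
    calc (∫ ξ, V (x / g ξ + ξ i0) ∂μ)
        ≤ ∫ ξ, (1 + (1 + δ) ^ α * |x| ^ α * g ξ ^ (-α) + B * |ξ i0| ^ α) ∂μ :=
          integral_mono_of_nonneg hVnn hdom (Eventually.of_forall hptw)
      _ = 1 + (1 + δ) ^ α * |x| ^ α * ρ + B * C := by
          have hf0 : Integrable (fun _ : Fin n → ℝ => (1:ℝ)) μ := integrable_const 1
          have hfg : Integrable (fun ξ => (1 + δ) ^ α * |x| ^ α * g ξ ^ (-α)) μ :=
            hint1.const_mul _
          have hf1 : Integrable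
              (fun ξ : Fin n → ℝ => (1:ℝ) + (1 + δ) ^ α * |x| ^ α * g ξ ^ (-α)) μ :=
            hf0.add hfg
          have hf2 : Integrable (fun ξ : Fin n → ℝ => B * |ξ i0| ^ α) μ := hint2.const_mul _
          rw [integral_add hf1 hf2, integral_add hf0 hfg,
            integral_const, MeasureTheory.integral_const_mul, MeasureTheory.integral_const_mul]
          simp [hρdef, hCdef]
      _ = 1 + ρ' * |x| ^ α + D := by
          rw [hDdef, ← hAρ]; ring
  -- conclude
  have hVx : V x = 1 + |x| ^ α := hV x
  have hxα : 0 ≤ |x| ^ α := Real.rpow_nonneg (abs_nonneg x) _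
  rcases le_or_gt (|x|) M with hcase | hcase
  · have hind : Set.indicator (Set.Icc (-M) M) (fun _ => D + ε) x = D + ε :=
      Set.indicator_of_mem (by rw [Set.mem_Icc, ← abs_le]; exact hcase) _
    rw [hind, hVx]
    have : ρ' = 1 - 2 * ε := by rw [hεdef]; ring
    nlinarith [hkey]
  · have hind : Set.indicator (Set.Icc (-M) M) (fun _ => D + ε) x = 0 :=
      Set.indicator_of_notMem (by rw [Set.mem_Icc, ← abs_le]; exact not_le.mpr hcase) _
    rw [hind, hVx]
    have hxM : ((D + ε) / ε) ≤ |x| ^ α := by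
      have h1 : ((D + ε) / ε) ^ (α⁻¹) ≤ |x| := (le_max_right _ _).trans hcase.le
      have h2 : (((D + ε) / ε) ^ (α⁻¹)) ^ α ≤ |x| ^ α :=
        Real.rpow_le_rpow (Real.rpow_nonneg (by positivity) _) h1 hα.le
      rwa [← Real.rpow_mul (by positivity), inv_mul_cancel₀ hα.ne', Real.rpow_one] at h2
    have hεx : D + ε ≤ ε * |x| ^ α := by
      rw [div_le_iff₀ hε0] at hxM; linarith [hxM]
    have : ρ' = 1 - 2 * ε := by rw [hεdef]; ring
    nlinarith [hkey]

open Real in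
theorem stmt_10 (n lam : ℕ) (hn : 1 ≤ n) (hlam : 1 ≤ lam) (d : ℝ) (hd : 0 < d)
    (α : ℝ) (hα : 0 < α)
    (hcontract : (∫ x, (Real.exp ((1 / (2 * d)) * ((∑ i, (x i) ^ 2) / n - 1))) ^ (-α)
        ∂(selLaw n lam)) < 1)
    (V : ℝ → ℝ) (hV : ∀ x, V x = 1 + |x| ^ α) :
    ∃ ε > (0 : ℝ), ∃ M > (0 : ℝ), ∃ b : ℝ,
      ∀ x : ℝ,
        (∫ ξ, V (x / Real.exp ((1 / (2 * d)) * ((∑ i, (ξ i) ^ 2) / n - 1)) + ξ ⟨0, hn⟩)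
            ∂(selLaw n lam)) - V x
          ≤ -ε * V x + Set.indicator (Set.Icc (-M) M) (fun _ => b) x := by
  classical
  set c : ℝ := 1 / (2 * d) with hcdef
  have hc : 0 < c := by positivity
  -- measurability of the order statistic
  have hordeq : orderStat lam 0 = fun ω =>
      Finset.univ.inf' ⟨⟨0, hlam⟩, Finset.mem_univ _⟩ ω := funext (orderStat_zero_eq hlam)
  have hordmeas : Measurable (orderStat lam 0) := by
    rw [hordeq]; exact measurable_finset_inf' _
  -- probability measure instances
  haveI : IsProbabilityMeasure (stdPi lam) := by
    unfold stdPi; infer_instance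
  have hfac : ∀ i : Fin n, IsProbabilityMeasure
      (if (i : ℕ) = 0 then Measure.map (orderStat lam 0) (stdPi lam)
        else gaussianReal 0 1) := by
    intro i
    split_ifs
    · exact Measure.isProbabilityMeasure_map hordmeas.aemeasurable
    · infer_instance
  haveI : ∀ i : Fin n, IsProbabilityMeasure
      ((fun i : Fin n => if (i : ℕ) = 0 then Measure.map (orderStat lam 0) (stdPi lam)
        else gaussianReal 0 1) i) := hfac
  haveI hP : IsProbabilityMeasure (selLaw n lam) := by
    unfold selLaw; infer_instance
  set g : (Fin n → ℝ) → ℝ :=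
    fun ξ => Real.exp (c * ((∑ i, (ξ i) ^ 2) / n - 1)) with hgdef
  have hgpos : ∀ ξ, 0 < g ξ := fun ξ => Real.exp_pos _
  -- the function `g ξ ^ (-α)` in exponential form
  have hgrpow : ∀ ξ, g ξ ^ (-α) = Real.exp ((c * ((∑ i, (ξ i) ^ 2) / n - 1)) * (-α)) := by
    intro ξ
    rw [hgdef]
    rw [Real.rpow_def_of_pos (Real.exp_pos _), Real.log_exp]
  have hSmeas : Measurable fun ξ : Fin n → ℝ => c * ((∑ i, (ξ i) ^ 2) / n - 1) := by
    apply Measurable.const_mul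
    apply Measurable.sub_const
    apply Measurable.div_const
    exact Finset.measurable_sum _ fun i _ => (measurable_pi_apply i).pow_const 2
  have hgm : Measurable g := Real.measurable_exp.comp hSmeas
  -- integrability of `g ^ (-α)`
  have hint1 : Integrable (fun ξ => g ξ ^ (-α)) (selLaw n lam) := by
    have hfun : (fun ξ => g ξ ^ (-α)) =
        fun ξ => Real.exp ((c * ((∑ i, (ξ i) ^ 2) / n - 1)) * (-α)) := funext hgrpow
    rw [hfun]
    refine (integrable_const (Real.exp (c * α))).mono'
      (Real.measurable_exp.comp (hSmeas.mul_const _)).aestronglyMeasurable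
      (Eventually.of_forall fun ξ => ?_)
    rw [Real.norm_eq_abs, abs_of_pos (Real.exp_pos _), Real.exp_le_exp]
    have hS : (0:ℝ) ≤ (∑ i, (ξ i) ^ 2) / n :=
      div_nonneg (Finset.sum_nonneg fun i _ => sq_nonneg _) (Nat.cast_nonneg n)
    nlinarith [mul_nonneg (mul_nonneg hc.le hα.le) hS]
  -- integrability of `|ξ₀| ^ α`
  have hFmeas : Measurable fun t : ℝ => |t| ^ α :=
    (Real.continuous_rpow_const hα.le).measurable.comp measurable_abs
  have hcomp : Integrable (fun ω => |orderStat lam 0 ω| ^ α) (stdPi lam) := by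
    have hGint : Integrable (fun ω : Fin lam → ℝ => ∑ j : Fin lam, |ω j| ^ α) (stdPi lam) := by
      apply integrable_finset_sum
      intro j _
      exact integrable_comp_eval' (fun _ => gaussianReal 0 1) j hFmeas
        (integrable_abs_rpow_gaussianReal hα)
    refine hGint.mono' (hFmeas.comp hordmeas).aestronglyMeasurable
      (Eventually.of_forall fun ω => ?_)
    obtain ⟨i, _, hi⟩ := Finset.exists_mem_eq_inf'
      (⟨⟨0, hlam⟩, Finset.mem_univ _⟩ : (Finset.univ : Finset (Fin lam)).Nonempty) ω
    have h1 : orderStat lam 0 ω = ω i := by rw [orderStat_zero_eq hlam ω, hi]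
    rw [Real.norm_eq_abs, abs_of_nonneg (Real.rpow_nonneg (abs_nonneg _) _), h1]
    exact Finset.single_le_sum (f := fun j => |ω j| ^ α)
      (fun j _ => Real.rpow_nonneg (abs_nonneg _) _) (Finset.mem_univ i)
  have hint2 : Integrable (fun ξ : Fin n → ℝ => |ξ ⟨0, hn⟩| ^ α) (selLaw n lam) := by
    apply integrable_comp_eval'
      (fun i : Fin n => if (i : ℕ) = 0 then Measure.map (orderStat lam 0) (stdPi lam)
        else gaussianReal 0 1) (⟨0, hn⟩ : Fin n) hFmeas
    have h0 : (if ((⟨0, hn⟩ : Fin n) : ℕ) = 0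
        then Measure.map (orderStat lam 0) (stdPi lam) else gaussianReal 0 1)
        = Measure.map (orderStat lam 0) (stdPi lam) := if_pos rfl
    rw [h0]
    exact (integrable_map_measure hFmeas.aestronglyMeasurable
      hordmeas.aemeasurable).mpr hcomp
  exact drift_main (selLaw n lam) g hgpos hgm ⟨0, hn⟩ hα hint1 hcontract hint2 V hV
end

section
/- For λ = 2 and 0 < c < 1, the limit divergence rate of the (1,2)-CSA-ES with cumulation equals ((1−c)/(d_σ n))·E[N_{1:2}]², which is strictly positive. -/
open MeasureTheory ProbabilityTheory Filter

open Real
open scoped ENNReal NNReal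

set_option linter.unnecessarySeqFocus false

lemma orderStat_two (ω : Fin 2 → ℝ) : orderStat 2 0 ω = min (ω 0) (ω 1) := by
  unfold orderStat
  have : List.ofFn ω = [ω 0, ω 1] := by simp [List.ofFn_succ]
  rw [this]
  rcases le_total (ω 0) (ω 1) with h | h
  · simp [List.insertionSort, List.orderedInsert, h, min_eq_left]
  · simp only [List.insertionSort, List.orderedInsert]
    rw [List.foldr_cons, List.foldr_cons, List.foldr_nil]
    simp only [List.orderedInsert]
    split_ifs with h2
    · simp [le_antisymm h2 h, min_eq_right h]
    · simp [min_eq_right h]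

lemma gpdf (x : ℝ) : gaussianPDFReal 0 1 x = (√(2*π))⁻¹ * rexp (-(1/2) * x^2) := by
  rw [gaussianPDFReal]
  simp only [NNReal.coe_one, mul_one, sub_zero]
  ring_nf

lemma integral_g (f : ℝ → ℝ) :
    ∫ x, f x ∂(gaussianReal 0 1) = ∫ x, gaussianPDFReal 0 1 x * f x := by
  rw [gaussianReal_of_var_ne_zero 0 one_ne_zero]
  have h : gaussianPDF 0 1 = fun x => ((gaussianPDFReal 0 1 x).toNNReal : ℝ≥0∞) := rfl
  rw [h, integral_withDensity_eq_integral_smul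
    ((measurable_gaussianPDFReal 0 1).real_toNNReal) f]
  congr 1
  ext x
  rw [NNReal.smul_def, smul_eq_mul, Real.coe_toNNReal _ (gaussianPDFReal_nonneg 0 1 x)]

lemma integrable_g_iff (f : ℝ → ℝ) :
    Integrable f (gaussianReal 0 1) ↔
      Integrable (fun x => gaussianPDFReal 0 1 x * f x) := by
  rw [gaussianReal_of_var_ne_zero 0 one_ne_zero]
  have h : gaussianPDF 0 1 = fun x => ((gaussianPDFReal 0 1 x).toNNReal : ℝ≥0∞) := rfl
  rw [h, integrable_withDensity_iff_integrable_smul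
    ((measurable_gaussianPDFReal 0 1).real_toNNReal)]
  apply integrable_congr
  filter_upwards with x
  rw [NNReal.smul_def, smul_eq_mul, Real.coe_toNNReal _ (gaussianPDFReal_nonneg 0 1 x)]
lemma int_sq_exp : ∫ x : ℝ, x * (x * rexp (-(1/2) * x^2)) = √(2*π) := by
  have hhalf : (0:ℝ) < 1/2 := by norm_num
  have hu : ∀ x : ℝ, HasDerivAt (fun y : ℝ => y) ((fun _ : ℝ => (1:ℝ)) x) x :=
    fun x => hasDerivAt_id x
  have hv : ∀ x : ℝ, HasDerivAt (fun y : ℝ => -rexp (-(1/2) * y^2))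
      ((fun y : ℝ => y * rexp (-(1/2) * y^2)) x) x := by
    intro x
    have h1 : HasDerivAt (fun y : ℝ => -(1/2) * y^2) (-(1/2) * (2 * x)) x :=
      (hasDerivAt_pow 2 x).const_mul _ |>.congr_deriv (by push_cast; ring)
    have := (h1.exp).fun_neg
    refine this.congr_deriv ?_
    ring
  have huv' : Integrable (fun x : ℝ => x * (x * rexp (-(1/2) * x^2))) := by
    have := integrable_rpow_mul_exp_neg_mul_sq hhalf (s := 2) (by norm_num)
    apply this.congr
    filter_upwards with x
    rw [show ((2:ℝ)) = ((2:ℕ):ℝ) by norm_num, Real.rpow_natCast]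
    ring
  have hu'v : Integrable (fun x : ℝ => (1:ℝ) * (-rexp (-(1/2) * x^2))) := by
    have h := (integrable_exp_neg_mul_sq hhalf).neg
    apply h.congr
    filter_upwards with x
    norm_num
  have huv : Integrable (fun x : ℝ => x * (-rexp (-(1/2) * x^2))) := by
    have h := (integrable_mul_exp_neg_mul_sq hhalf).neg
    apply h.congr
    filter_upwards with x
    norm_num
  have := integral_mul_deriv_eq_deriv_mul_of_integrable (fun x _ => hu x) (fun x _ => hv x)
    (by simpa [Pi.mul_def] using huv') (by simpa [Pi.mul_def] using hu'v)
    (by simpa [Pi.mul_def] using huv)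
  rw [this]
  have : ∫ x : ℝ, (1:ℝ) * (-rexp (-(1/2) * x^2)) = -√(2*π) := by
    simp only [one_mul]
    rw [integral_neg, integral_gaussian]
    rw [neg_inj, show π / (1/2) = 2 * π by ring]
  rw [this, neg_neg]

lemma sqrt2pi_pos : (0:ℝ) < √(2*π) := Real.sqrt_pos.2 (by positivity)

lemma moment2_g : ∫ x, x^2 ∂(gaussianReal 0 1) = 1 := by
  rw [integral_g]
  have h : (fun x : ℝ => gaussianPDFReal 0 1 x * x^2)
      = fun x => (√(2*π))⁻¹ * (x * (x * rexp (-(1/2) * x^2))) := by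
    funext x; rw [gpdf]; ring
  rw [h, integral_const_mul, int_sq_exp, inv_mul_cancel₀ sqrt2pi_pos.ne']

lemma int_sq_g : Integrable (fun x : ℝ => x^2) (gaussianReal 0 1) := by
  rw [integrable_g_iff]
  have h := (integrable_rpow_mul_exp_neg_mul_sq (show (0:ℝ) < 1/2 by norm_num)
    (s := 2) (by norm_num)).const_mul (√(2*π))⁻¹
  apply h.congr
  filter_upwards with x
  rw [gpdf, show ((2:ℝ)) = ((2:ℕ):ℝ) by norm_num, Real.rpow_natCast]
  ring

lemma int_id_g : Integrable (fun x : ℝ => x) (gaussianReal 0 1) := by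
  rw [integrable_g_iff]
  have h := (integrable_mul_exp_neg_mul_sq (show (0:ℝ) < 1/2 by norm_num)).const_mul (√(2*π))⁻¹
  apply h.congr
  filter_upwards with x
  rw [gpdf]; ring

lemma gneg : Measure.map (fun x : ℝ => -x) (gaussianReal 0 1) = gaussianReal 0 1 := by
  have := gaussianReal_map_const_mul (μ := (0:ℝ)) (v := 1) (-1)
  have h2 : (NNReal.mk ((-1:ℝ)^2) (sq_nonneg _)) * 1 = 1 := by
    ext; norm_num
  rw [h2] at this
  simpa [neg_one_mul] using this

noncomputable def nu2 : Measure (ℝ × ℝ) := (gaussianReal 0 1).prod (gaussianReal 0 1)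

instance : IsProbabilityMeasure nu2 := by unfold nu2; infer_instance

lemma map_fst_nu2 : Measure.map Prod.fst nu2 = gaussianReal 0 1 := by
  unfold nu2; simp

lemma map_snd_nu2 : Measure.map Prod.snd nu2 = gaussianReal 0 1 := by
  unfold nu2; simp

lemma int_comp_fst {f : ℝ → ℝ} (hf : Integrable f (gaussianReal 0 1)) :
    Integrable (fun p : ℝ × ℝ => f p.1) nu2 := by
  have h1 : AEStronglyMeasurable f (Measure.map Prod.fst nu2) := by
    rw [map_fst_nu2]; exact hf.1
  exact (integrable_map_measure h1 measurable_fst.aemeasurable).1 (by rwa [map_fst_nu2])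

lemma int_comp_snd {f : ℝ → ℝ} (hf : Integrable f (gaussianReal 0 1)) :
    Integrable (fun p : ℝ × ℝ => f p.2) nu2 := by
  have h1 : AEStronglyMeasurable f (Measure.map Prod.snd nu2) := by
    rw [map_snd_nu2]; exact hf.1
  exact (integrable_map_measure h1 measurable_snd.aemeasurable).1 (by rwa [map_snd_nu2])

lemma integral_comp_fst {f : ℝ → ℝ} (hf : AEStronglyMeasurable f (gaussianReal 0 1)) :
    ∫ p, f p.1 ∂nu2 = ∫ x, f x ∂(gaussianReal 0 1) := by
  rw [← map_fst_nu2, integral_map measurable_fst.aemeasurable (by rwa [map_fst_nu2])]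

lemma integral_comp_snd {f : ℝ → ℝ} (hf : AEStronglyMeasurable f (gaussianReal 0 1)) :
    ∫ p, f p.2 ∂nu2 = ∫ x, f x ∂(gaussianReal 0 1) := by
  rw [← map_snd_nu2, integral_map measurable_snd.aemeasurable (by rwa [map_snd_nu2])]

lemma nu2_neg : Measure.map (Prod.map (fun x : ℝ => -x) (fun x : ℝ => -x)) nu2 = nu2 :=
  (MeasurePreserving.prod ⟨measurable_neg, gneg⟩ ⟨measurable_neg, gneg⟩).map_eq

lemma integral_nu2_neg (F : ℝ × ℝ → ℝ) :
    ∫ p, F (-p.1, -p.2) ∂nu2 = ∫ p, F p ∂nu2 := by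
  have hmp : MeasurePreserving (Prod.map (fun x : ℝ => -x) (fun x : ℝ => -x)) nu2 nu2 :=
    ⟨measurable_neg.prodMap measurable_neg, nu2_neg⟩
  have he : MeasurableEmbedding (Prod.map (fun x : ℝ => -x) (fun x : ℝ => -x)) :=
    ((Homeomorph.neg ℝ).prodCongr (Homeomorph.neg ℝ)).measurableEmbedding
  exact hmp.integral_comp he F

lemma int_min_nu2 : Integrable (fun p : ℝ × ℝ => min p.1 p.2) nu2 := by
  refine Integrable.mono ((int_comp_fst int_id_g).abs.add (int_comp_snd int_id_g).abs)
    (continuous_fst.min continuous_snd).aestronglyMeasurable ?_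
  filter_upwards with p
  have h1 : |min p.1 p.2| ≤ |p.1| + |p.2| := by
    rcases min_cases p.1 p.2 with ⟨h, _⟩ | ⟨h, _⟩ <;> rw [h] <;>
      [exact le_add_of_le_of_nonneg le_rfl (abs_nonneg _);
       exact le_add_of_nonneg_of_le (abs_nonneg _) le_rfl]
  simpa [Real.norm_eq_abs, abs_of_nonneg (add_nonneg (abs_nonneg p.1) (abs_nonneg p.2))] using h1

lemma int_max_nu2 : Integrable (fun p : ℝ × ℝ => max p.1 p.2) nu2 := by
  refine Integrable.mono ((int_comp_fst int_id_g).abs.add (int_comp_snd int_id_g).abs)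
    (continuous_fst.max continuous_snd).aestronglyMeasurable ?_
  filter_upwards with p
  have h1 : |max p.1 p.2| ≤ |p.1| + |p.2| := by
    rcases max_cases p.1 p.2 with ⟨h, _⟩ | ⟨h, _⟩ <;> rw [h] <;>
      [exact le_add_of_le_of_nonneg le_rfl (abs_nonneg _);
       exact le_add_of_nonneg_of_le (abs_nonneg _) le_rfl]
  simpa [Real.norm_eq_abs, abs_of_nonneg (add_nonneg (abs_nonneg p.1) (abs_nonneg p.2))] using h1

lemma int_minsq_nu2 : Integrable (fun p : ℝ × ℝ => (min p.1 p.2)^2) nu2 := by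
  refine Integrable.mono ((int_comp_fst int_sq_g).add (int_comp_snd int_sq_g))
    ((continuous_fst.min continuous_snd).pow 2).aestronglyMeasurable ?_
  filter_upwards with p
  have h1 : (min p.1 p.2)^2 ≤ p.1^2 + p.2^2 := by
    rcases min_cases p.1 p.2 with ⟨h, _⟩ | ⟨h, _⟩ <;> rw [h] <;> nlinarith [sq_nonneg p.1, sq_nonneg p.2]
  have h2 : (0:ℝ) ≤ p.1^2 + p.2^2 := by positivity
  simpa [Real.norm_eq_abs, abs_of_nonneg (sq_nonneg (min p.1 p.2)), abs_of_nonneg (sq_nonneg (max p.1 p.2)), abs_of_nonneg h2] using h1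

lemma int_maxsq_nu2 : Integrable (fun p : ℝ × ℝ => (max p.1 p.2)^2) nu2 := by
  refine Integrable.mono ((int_comp_fst int_sq_g).add (int_comp_snd int_sq_g))
    ((continuous_fst.max continuous_snd).pow 2).aestronglyMeasurable ?_
  filter_upwards with p
  have h1 : (max p.1 p.2)^2 ≤ p.1^2 + p.2^2 := by
    rcases max_cases p.1 p.2 with ⟨h, _⟩ | ⟨h, _⟩ <;> rw [h] <;> nlinarith [sq_nonneg p.1, sq_nonneg p.2]
  have h2 : (0:ℝ) ≤ p.1^2 + p.2^2 := by positivity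
  simpa [Real.norm_eq_abs, abs_of_nonneg (sq_nonneg (min p.1 p.2)), abs_of_nonneg (sq_nonneg (max p.1 p.2)), abs_of_nonneg h2] using h1

lemma int_abs_nu2 : Integrable (fun p : ℝ × ℝ => |p.1 - p.2|) nu2 := by
  have := (int_max_nu2.sub int_min_nu2)
  apply this.congr
  filter_upwards with p
  show max p.1 p.2 - min p.1 p.2 = |p.1 - p.2|
  rw [abs_sub_comm]
  exact max_sub_min_eq_abs p.1 p.2

lemma max_eq_neg_min : ∫ p, max p.1 p.2 ∂nu2 = -∫ p, min p.1 p.2 ∂nu2 := by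
  have h := integral_nu2_neg (fun p => max p.1 p.2)
  rw [← h]
  have : (fun p : ℝ × ℝ => max (-p.1) (-p.2)) = fun p => -(min p.1 p.2) := by
    funext p; rw [max_neg_neg]
  simp only [this, integral_neg]

lemma minsq_eq_maxsq : ∫ p, (min p.1 p.2)^2 ∂nu2 = ∫ p, (max p.1 p.2)^2 ∂nu2 := by
  have h := integral_nu2_neg (fun p => (max p.1 p.2)^2)
  rw [← h]
  congr 1
  funext p
  rw [max_neg_neg, neg_pow, neg_one_sq, one_mul]

lemma minsq_eq_one : ∫ p, (min p.1 p.2)^2 ∂nu2 = 1 := by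
  have hsum : ∫ p, ((min p.1 p.2)^2 + (max p.1 p.2)^2) ∂nu2 = 2 := by
    have hpt : (fun p : ℝ × ℝ => (min p.1 p.2)^2 + (max p.1 p.2)^2)
        = fun p => p.1^2 + p.2^2 := by
      funext p
      rcases le_total p.1 p.2 with h | h <;>
        simp [min_eq_left, min_eq_right, max_eq_left, max_eq_right, h] <;> ring
    rw [hpt, integral_add (int_comp_fst int_sq_g) (int_comp_snd int_sq_g),
      integral_comp_fst int_sq_g.1, integral_comp_snd int_sq_g.1, moment2_g]
    norm_num
  rw [integral_add int_minsq_nu2 int_maxsq_nu2, ← minsq_eq_maxsq] at hsum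
  linarith

lemma min_neg : ∫ p, min p.1 p.2 ∂nu2 < 0 := by
  have hdiff : (∫ p, max p.1 p.2 ∂nu2) - ∫ p, min p.1 p.2 ∂nu2
      = ∫ p, |p.1 - p.2| ∂nu2 := by
    rw [← integral_sub int_max_nu2 int_min_nu2]
    congr 1
    funext p
    rw [abs_sub_comm]
    exact max_sub_min_eq_abs p.1 p.2
  have hpos : 0 < ∫ p, |p.1 - p.2| ∂nu2 := by
    set S : Set (ℝ × ℝ) := Set.Iio (0:ℝ) ×ˢ Set.Ioi (1:ℝ) with hS
    have hSm : MeasurableSet S := measurableSet_Iio.prod measurableSet_Ioi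
    have hvol : volume ≪ gaussianReal (0:ℝ) 1 := gaussianReal_absolutelyContinuous' 0 one_ne_zero
    have hS0 : nu2 S ≠ 0 := by
      rw [hS]
      unfold nu2
      rw [Measure.prod_prod]
      refine mul_ne_zero (fun h => ?_) (fun h => ?_)
      · have := hvol h
        simp [Real.volume_Iio] at this
      · have := hvol h
        simp [Real.volume_Ioi] at this
    have hStoReal : 0 < (nu2 S).toReal :=
      ENNReal.toReal_pos hS0 (measure_ne_top _ _)
    have h1 : 1 * (nu2 S).toReal ≤ ∫ p in S, |p.1 - p.2| ∂nu2 := by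
      refine setIntegral_ge_of_const_le_real hSm (measure_ne_top _ _) (fun p hp => ?_)
        int_abs_nu2.integrableOn
      rcases hp with ⟨hp1, hp2⟩
      simp only [Set.mem_Iio] at hp1
      simp only [Set.mem_Ioi] at hp2
      have : 1 ≤ p.2 - p.1 := by linarith
      calc (1:ℝ) ≤ p.2 - p.1 := this
        _ ≤ |p.2 - p.1| := le_abs_self _
        _ = |p.1 - p.2| := abs_sub_comm _ _
    have h2 : ∫ p in S, |p.1 - p.2| ∂nu2 ≤ ∫ p, |p.1 - p.2| ∂nu2 :=
      setIntegral_le_integral int_abs_nu2 (by filter_upwards with p using abs_nonneg _)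
    linarith
  have hmax := max_eq_neg_min
  linarith

lemma stdPi_min : ∫ u, orderStat 2 0 u ∂(stdPi 2) = ∫ p, min p.1 p.2 ∂nu2 := by
  have hpi : MeasurePreserving (MeasurableEquiv.piFinTwo (fun _ : Fin 2 => ℝ))
      (stdPi 2) nu2 := measurePreserving_piFinTwo _
  have h := hpi.integral_comp (MeasurableEquiv.piFinTwo (fun _ : Fin 2 => ℝ)).measurableEmbedding
    (fun p : ℝ × ℝ => min p.1 p.2)
  rw [← h]
  congr 1
  funext u
  rw [orderStat_two]
  rfl

lemma stdPi_minsq : ∫ u, (orderStat 2 0 u)^2 ∂(stdPi 2) = 1 := by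
  have hpi : MeasurePreserving (MeasurableEquiv.piFinTwo (fun _ : Fin 2 => ℝ))
      (stdPi 2) nu2 := measurePreserving_piFinTwo _
  have h := hpi.integral_comp (MeasurableEquiv.piFinTwo (fun _ : Fin 2 => ℝ)).measurableEmbedding
    (fun p : ℝ × ℝ => (min p.1 p.2)^2)
  rw [← minsq_eq_one, ← h]
  congr 1
  funext u
  rw [orderStat_two]
  rfl

theorem stmt_15 (n : ℕ) (hn : 1 ≤ n) (c d : ℝ) (hc0 : 0 < c) (hc1 : c < 1)
    (hd : 0 < d) :
    (1 / (2 * d * n)) *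
        (2 * (1 - c) * (∫ u, orderStat 2 0 u ∂(stdPi 2)) ^ 2 +
          c * ((∫ u, (orderStat 2 0 u) ^ 2 ∂(stdPi 2)) - 1))
      = ((1 - c) / (d * n)) * (∫ u, orderStat 2 0 u ∂(stdPi 2)) ^ 2 ∧
    0 < ((1 - c) / (d * n)) * (∫ u, orderStat 2 0 u ∂(stdPi 2)) ^ 2 := by
  have hsq : ∫ u, (orderStat 2 0 u) ^ 2 ∂(stdPi 2) = 1 := stdPi_minsq
  set A := ∫ u, orderStat 2 0 u ∂(stdPi 2) with hAdef
  have hAneg : A < 0 := by rw [hAdef, stdPi_min]; exact min_neg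
  have hn' : (0:ℝ) < (n:ℝ) := by
    have : (1:ℝ) ≤ (n:ℝ) := by exact_mod_cast hn
    linarith
  have hA2 : 0 < A ^ 2 := by
    rw [sq]
    exact mul_pos_of_neg_of_neg hAneg hAneg
  constructor
  · rw [hsq]
    field_simp
    ring
  · exact mul_pos (div_pos (by linarith) (mul_pos hd hn')) hA2
end
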